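/- arXiv:2510.04205 — 2 statements merged into one kernel-verified Lean document; each statement's English description precedes it below -/
import Mathlib

section
/- If the interval feasibility relation is downward closed and every singleton interval [t_{i-1}, t_i] is feasible, then the greedy algorithm that repeatedly extends the current segment as far right as possible produces a partition of [t₀, t_k] into feasible intervals using the minimum possible number of intervals. -/
/-- Greedy optimality for downward-closed interval feasibility: a maximal-step
greedy partition uses the minimum possible number of intervals. -/
theorem greedy_optimal (k : ℕ) (F : ℕ → ℕ → Prop)
    (hdown : ∀ j i j' i', F j i → j ≤ j' → j' < i' → i' ≤ i → F j' i')
    (hbase : ∀ i, 0 < i → i ≤ k → F (i - 1) i)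
    (r : ℕ) (g : Fin (r + 1) → ℕ)
    (hg0 : g 0 = 0) (hgk : g (Fin.last r) = k) (hmono : StrictMono g)
    (hstep : ∀ j : Fin r, F (g j.castSucc) (g j.succ))
    (hmax : ∀ j : Fin r, ∀ i, g j.succ < i → i ≤ k → ¬ F (g j.castSucc) i)
    (r' : ℕ) (g' : Fin (r' + 1) → ℕ)
    (hg'0 : g' 0 = 0) (hg'k : g' (Fin.last r') = k) (hmono' : StrictMono g')
    (hstep' : ∀ j : Fin r', F (g' j.castSucc) (g' j.succ)) :
    r ≤ r' := by
  have key : ∀ j : ℕ, ∀ (hj' : j < r' + 1) (hj : j < r + 1),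
      g' ⟨j, hj'⟩ ≤ g ⟨j, hj⟩ := by
    intro j
    induction j with
    | zero =>
      intro hj' hj
      have h0 : (⟨0, hj⟩ : Fin (r + 1)) = 0 := rfl
      have h0' : (⟨0, hj'⟩ : Fin (r' + 1)) = 0 := rfl
      rw [h0, h0', hg0, hg'0]
    | succ n ih =>
      intro hj' hj
      by_contra h
      push_neg at h
      have hn' : n < r' + 1 := Nat.lt_of_succ_lt hj'
      have hn : n < r + 1 := Nat.lt_of_succ_lt hj
      have ihn := ih hn' hn
      have hF : F (g' ⟨n, hn'⟩) (g' ⟨n + 1, hj'⟩) :=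
        hstep' ⟨n, Nat.lt_of_succ_lt_succ hj'⟩
      have hk : g' ⟨n + 1, hj'⟩ ≤ k := by
        rw [← hg'k]; exact hmono'.monotone (Fin.le_last _)
      have hgg : g ⟨n, hn⟩ < g ⟨n + 1, hj⟩ := hmono (by simp [Fin.lt_def])
      have hlt : g ⟨n, hn⟩ < g' ⟨n + 1, hj'⟩ := lt_trans hgg h
      exact hmax ⟨n, Nat.lt_of_succ_lt_succ hj⟩ (g' ⟨n + 1, hj'⟩) h hk
        (hdown _ _ _ _ hF ihn hlt le_rfl)
  by_contra hc
  push_neg at hc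
  have h1 : r' < r + 1 := Nat.lt_of_lt_of_le hc (Nat.le_succ r)
  have h2 := key r' (Nat.lt_succ_self r') h1
  have h3 : g' ⟨r', Nat.lt_succ_self r'⟩ = k := hg'k
  have h4 : g ⟨r', h1⟩ < g (Fin.last r) := hmono (by simp [Fin.lt_def, hc])
  rw [hgk] at h4
  omega
end

section
/- For a monotone feasibility structure (downward-closed, with all adjacent intervals feasible), the DP value dp[i] defined by dp[0] = 1 and dp[i] = 1 + min_{j < i, F(j,i)} dp[j] is nondecreasing in i. -/
/-- Monotonicity of the DP values: for a downward-closed feasibility structure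
with all adjacent intervals feasible, dp[i] is nondecreasing in i. -/
theorem dp_monotone (k : ℕ) (F : ℕ → ℕ → Prop)
    (hdown : ∀ j i j' i', F j i → j ≤ j' → j' < i' → i' ≤ i → F j' i')
    (hbase : ∀ i, 0 < i → i ≤ k → F (i - 1) i)
    (dp : ℕ → ℕ) (hdp0 : dp 0 = 1)
    (hdp : ∀ i, 0 < i → i ≤ k →
      IsLeast {v : ℕ | ∃ j < i, F j i ∧ v = dp j + 1} (dp i)) :
    ∀ i i', i ≤ i' → i' ≤ k → dp i ≤ dp i' := by
  have step : ∀ i, i + 1 ≤ k → dp i ≤ dp (i + 1) := by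
    intro i hik
    obtain ⟨hmem, hlb⟩ := hdp (i + 1) (Nat.succ_pos i) hik
    obtain ⟨j, hj, hF, heq⟩ := hmem
    rcases Nat.lt_succ_iff_lt_or_eq.mp hj with hji | rfl
    · -- j < i, so dp j + 1 is feasible for i
      have hi0 : 0 < i := Nat.pos_of_ne_zero (by omega)
      have := (hdp i hi0 (by omega)).2 ⟨j, hji, hdown j (i+1) j i hF le_rfl hji (by omega), rfl⟩
      omega
    · rw [heq]; exact Nat.le_succ _
  intro i i' hle hk
  induction i' with
  | zero => exact Nat.le_zero.mp hle ▸ le_rfl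
  | succ n ih =>
    rcases Nat.le_succ_iff.mp hle with h | h
    · exact le_trans (ih h (by omega)) (step n hk)
    · exact h ▸ le_rfl
end
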